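/- For any string T of length n with T[n] = $ a unique sentinel, and any m ≥ 1, the number of distinct length-m substrings of the infinite periodic extension T^∞ is at most m·z, where z is the number of LZ77 factors of T. -/

import Mathlib

/-- `S` occurs in `T` starting at (0-indexed) position `i`. -/
def OccursAt {α : Type*} (T S : List α) (i : ℕ) : Prop :=
  i + S.length ≤ T.length ∧ (T.drop i).take S.length = S

/-- `S` has an occurrence in `T` starting strictly before position `p`
(the occurrence may overlap position `p`). -/
def OccursBefore {α : Type*} (T S : List α) (p : ℕ) : Prop :=
  ∃ i, i < p ∧ OccursAt T S i

/-- `F` is the greedy LZ77 factor of `T` starting at position `p`: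
either the leftmost occurrence of a single symbol, or the longest substring
starting at `p` that occurs starting at an earlier position. -/
def LZ77Factor {α : Type*} (T : List α) (p : ℕ) (F : List α) : Prop :=
  F ≠ [] ∧ OccursAt T F p ∧
    ((∃ a, F = [a] ∧ a ∉ T.take p) ∨
      (OccursBefore T F p ∧
        ∀ F', OccursAt T F' p → OccursBefore T F' p → F'.length ≤ F.length))

/-- `fs` is the greedy LZ77 factorization of `T`. -/
def IsLZ77 {α : Type*} (T : List α) (fs : List (List α)) : Prop :=
  fs.flatten = T ∧
    ∀ k (hk : k < fs.length),
      LZ77Factor T (((fs.take k).map List.length).sum) (fs.get ⟨k, hk⟩)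

/-- The length-`m` substring of the infinite periodic extension `T^∞` of `T`
starting at position `i`, where `T^∞[i] = T[i mod |T|]` (0-indexed). -/
def TinfTake {α : Type*} (T : List α) (hT : T ≠ []) (i m : ℕ) : List α :=
  (List.range m).map fun d =>
    T.get ⟨(i + d) % T.length, Nat.mod_lt _ (List.length_pos_iff.mpr hT)⟩


section Aux
variable {α : Type*}

lemma lz_tinf_length (T : List α) (hT : T ≠ []) (i m : ℕ) :
    (TinfTake T hT i m).length = m := by simp [TinfTake]

lemma lz_tinf_getElem (T : List α) (hT : T ≠ []) (i m d : ℕ) (hd : d < m) :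
    (TinfTake T hT i m)[d]'(by simp [lz_tinf_length, hd]) =
      T[(i + d) % T.length]'(Nat.mod_lt _ (List.length_pos_iff.mpr hT)) := by
  simp [TinfTake, hd]

lemma lz_tinf_mod (T : List α) (hT : T ≠ []) (i j m : ℕ) (hij : i % T.length = j % T.length) :
    TinfTake T hT i m = TinfTake T hT j m := by
  apply List.ext_getElem (by simp [lz_tinf_length])
  intro d h1 h2
  rw [lz_tinf_length] at h1
  rw [lz_tinf_getElem T hT i m d h1, lz_tinf_getElem T hT j m d h1]
  congr 1
  rw [← Nat.mod_add_mod, hij, Nat.mod_add_mod]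

lemma lz_occursAt_iff (T S : List α) (i : ℕ) :
    OccursAt T S i ↔ ∃ _h1 : i + S.length ≤ T.length,
      ∀ d (hd : d < S.length), S[d] = T[i + d]'(by omega) := by
  constructor
  · rintro ⟨h1, h2⟩
    refine ⟨h1, fun d hd => ?_⟩
    have := List.getElem_of_eq h2.symm (i := d) hd
    rw [this, List.getElem_take, List.getElem_drop]
  · rintro ⟨h1, h2⟩
    refine ⟨h1, ?_⟩
    apply List.ext_getElem (by simp; omega)
    intro d hd1 hd2
    rw [List.getElem_take, List.getElem_drop]
    exact (h2 d hd2).symm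

lemma lz_eq_tinf_of_occursAt (T : List α) (hT : T ≠ []) (S : List α) (j m : ℕ)
    (hlen : S.length = m) (hocc : OccursAt T S j) : S = TinfTake T hT j m := by
  rw [lz_occursAt_iff] at hocc
  obtain ⟨h1, h2⟩ := hocc
  apply List.ext_getElem (by simp [lz_tinf_length, hlen])
  intro d hd1 hd2
  rw [lz_tinf_length] at hd2
  rw [lz_tinf_getElem T hT j m d hd2]
  rw [h2 d hd1]
  congr 1
  exact (Nat.mod_eq_of_lt (by omega)).symm

lemma lz_tinf_occursAt (T : List α) (hT : T ≠ []) (i m : ℕ) (him : i + m ≤ T.length) :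
    OccursAt T (TinfTake T hT i m) i := by
  rw [lz_occursAt_iff]
  refine ⟨by rw [lz_tinf_length]; omega, fun d hd => ?_⟩
  have hd' : d < m := by rwa [lz_tinf_length] at hd
  rw [lz_tinf_getElem T hT i m d hd']
  congr 1
  exact Nat.mod_eq_of_lt (by omega)

lemma lz_count_two (T : List α) [DecidableEq α] (a : α) (i j : ℕ) (hij : i < j)
    (hj : j < T.length) (hi' : T[i]'(by omega) = a) (hj' : T[j] = a) :
    2 ≤ T.count a := by
  have h1 : a ∈ T.drop (i+1) := by
    have e1 : (T.drop (i+1))[j - (i+1)]'(by simp; omega) = T[i + 1 + (j - (i+1))]'(by omega) :=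
      List.getElem_drop
    have e2 : T[i + 1 + (j - (i+1))]'(by omega) = T[j] := by congr 1; omega
    have : (T.drop (i+1))[j - (i+1)]'(by simp; omega) = a := by rw [e1, e2, hj']
    exact this ▸ List.getElem_mem _
  have hsub : [a, a].Sublist T := by
    have h2 : [a].Sublist (T.drop (i+1)) := List.singleton_sublist.mpr h1
    have h3 : (a :: [a]).Sublist (T[i] :: T.drop (i+1)) := hi' ▸ h2.cons₂ a
    have h4 : T[i] :: T.drop (i+1) = T.drop i := List.getElem_cons_drop (by omega)
    exact (h4 ▸ h3).trans (List.drop_sublist i T)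
  have := hsub.count_le a
  simpa using this

lemma lz_exists_between (p : ℕ → ℕ) (j : ℕ) : ∀ z, p 0 ≤ j → j < p z →
    ∃ k < z, p k ≤ j ∧ j < p (k + 1) := by
  intro z
  induction z with
  | zero => intro h0 hz; omega
  | succ z ih =>
    intro h0 hz
    by_cases hpz : p z ≤ j
    · exact ⟨z, Nat.lt_succ_self z, hpz, hz⟩
    · obtain ⟨k, hk, h⟩ := ih h0 (by omega)
      exact ⟨k, by omega, h⟩

end Aux

section LZ
variable {α : Type*}

def lzP (fs : List (List α)) (k : ℕ) : ℕ := ((fs.take k).map List.length).sum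

lemma lzP_zero (fs : List (List α)) : lzP fs 0 = 0 := rfl

lemma lzP_eq (fs : List (List α)) (k : ℕ) : lzP fs k = ((fs.map List.length).take k).sum := by
  rw [lzP, List.map_take]

lemma lzP_succ (fs : List (List α)) (k : ℕ) (hk : k < fs.length) :
    lzP fs (k + 1) = lzP fs k + (fs.get ⟨k, hk⟩).length := by
  rw [lzP_eq, lzP_eq, List.sum_take_succ _ k (by simpa using hk)]
  simp

lemma lzP_step (fs : List (List α)) (k : ℕ) : lzP fs k ≤ lzP fs (k + 1) := by
  by_cases hk : k < fs.length
  · rw [lzP_succ fs k hk]; omega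
  · rw [lzP, lzP, List.take_of_length_le (by omega), List.take_of_length_le (by omega)]

lemma lzP_mono (fs : List (List α)) (k k' : ℕ) (hkk : k ≤ k') : lzP fs k ≤ lzP fs k' := by
  induction k' with
  | zero => have : k = 0 := by omega
            rw [this]
  | succ k' ih =>
    rcases Nat.lt_or_ge k (k' + 1) with hlt | hge
    · exact le_trans (ih (by omega)) (lzP_step fs k')
    · have : k = k' + 1 := by omega
      rw [this]

lemma lzP_len (T : List α) (fs : List (List α)) (h : IsLZ77 T fs) :
    lzP fs fs.length = T.length := by
  rw [lzP, List.take_of_length_le (le_refl _), ← List.length_flatten, h.1]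

lemma lzP_strict (T : List α) (fs : List (List α)) (h : IsLZ77 T fs) (k : ℕ)
    (hk : k < fs.length) : lzP fs k < lzP fs (k + 1) := by
  rw [lzP_succ fs k hk]
  have := (h.2 k hk).1
  have := List.length_pos_iff.mpr this
  omega

lemma lz_sentinel (T : List α) [DecidableEq α] (hT : T ≠ [])
    (hsent : T.count (T.getLast hT) = 1) (i : ℕ) (hi : i < T.length)
    (he : T[i] = T.getLast hT) : i = T.length - 1 := by
  by_contra hne
  have hi' : i < T.length - 1 := by omega
  have hlast : T[T.length - 1]'(by omega) = T.getLast hT :=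
    (List.getLast_eq_getElem hT).symm
  have := lz_count_two T (T.getLast hT) i (T.length - 1) (by omega) (by omega) he hlast
  omega

lemma lz_fs_ne (T : List α) (hT : T ≠ []) (fs : List (List α)) (h : IsLZ77 T fs) :
    0 < fs.length := by
  rcases fs with _ | ⟨F, fs⟩
  · exact absurd h.1.symm hT
  · simp

lemma lz_lastP (T : List α) [DecidableEq α] (hT : T ≠ [])
    (hsent : T.count (T.getLast hT) = 1) (fs : List (List α)) (h : IsLZ77 T fs) :
    lzP fs (fs.length - 1) = T.length - 1 := by
  have hz : 0 < fs.length := lz_fs_ne T hT fs h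
  have hn1 : 0 < T.length := List.length_pos_iff.mpr hT
  have hPz := lzP_len T fs h
  obtain ⟨k, hk, hk1, hk2⟩ := lz_exists_between (lzP fs) (T.length - 1) fs.length
    (by rw [lzP_zero]; omega) (by omega)
  have hF : LZ77Factor T (lzP fs k) (fs.get ⟨k, hk⟩) := h.2 k hk
  have hsucc := lzP_succ fs k hk
  rcases hF.2.2 with ⟨a, ha, _⟩ | ⟨⟨q, hq, hqocc⟩, _⟩
  · have hF1 : (fs.get ⟨k, hk⟩).length = 1 := by rw [ha]; rfl
    have hPk : lzP fs k = T.length - 1 := by omega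
    have hkz : k + 1 = fs.length := by
      by_contra hc
      have hk2' : k + 1 < fs.length := by omega
      have h1 := lzP_strict T fs h (k + 1) hk2'
      have h2 := lzP_mono fs (k + 1 + 1) fs.length (by omega)
      omega
    have : fs.length - 1 = k := by omega
    rw [this, hPk]
  · exfalso
    obtain ⟨hFb, hFelem⟩ := (lz_occursAt_iff T (fs.get ⟨k, hk⟩) (lzP fs k)).mp hF.2.1
    obtain ⟨hqb, hqelem⟩ := (lz_occursAt_iff T (fs.get ⟨k, hk⟩) q).mp hqocc
    have ht : T.length - 1 - lzP fs k < (fs.get ⟨k, hk⟩).length := by omega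
    have e1 := hFelem (T.length - 1 - lzP fs k) ht
    have e2 := hqelem (T.length - 1 - lzP fs k) ht
    have e3 : T[lzP fs k + (T.length - 1 - lzP fs k)]'(by omega) =
        T[T.length - 1]'(by omega) := by congr 1; omega
    have e4 : T[q + (T.length - 1 - lzP fs k)]'(by omega) = T.getLast hT :=
      e2.symm.trans (e1.trans (e3.trans (List.getLast_eq_getElem hT).symm))
    have := lz_sentinel T hT hsent (q + (T.length - 1 - lzP fs k)) (by omega) e4
    omega

lemma lz_main (T : List α) [DecidableEq α] (hT : T ≠ [])
    (hsent : T.count (T.getLast hT) = 1) (fs : List (List α)) (h : IsLZ77 T fs)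
    (m : ℕ) (hm : 1 ≤ m) (i : ℕ) :
    ∃ k < fs.length, ∃ d < m,
      TinfTake T hT i m = TinfTake T hT (lzP fs k + T.length * m - d) m := by
  classical
  have hn1 : 0 < T.length := List.length_pos_iff.mpr hT
  have hz : 0 < fs.length := lz_fs_ne T hT fs h
  have hPz := lzP_len T fs h
  have hi' : i % T.length < T.length := Nat.mod_lt _ hn1
  have hS : TinfTake T hT i m = TinfTake T hT (i % T.length) m :=
    lz_tinf_mod T hT i (i % T.length) m (Nat.mod_mod_of_dvd i dvd_rfl).symm
  by_cases hcase : i % T.length + m ≤ T.length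
  · -- no wrap
    set S := TinfTake T hT (i % T.length) m with hSdef
    have hSlen : S.length = m := lz_tinf_length T hT _ m
    have hSocc : OccursAt T S (i % T.length) := lz_tinf_occursAt T hT _ m hcase
    have hex : ∃ j, OccursAt T S j := ⟨_, hSocc⟩
    set j := Nat.find hex with hjdef
    have hj : OccursAt T S j := Nat.find_spec hex
    have hmin : ∀ j' < j, ¬OccursAt T S j' := fun j' hj' => Nat.find_min hex hj'
    have hjb : j + m ≤ T.length := by have := hj.1; omega
    obtain ⟨k, hk, hk1, hk2⟩ := lz_exists_between (lzP fs) j fs.length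
      (by rw [lzP_zero]; omega) (by omega)
    have hSj : S = TinfTake T hT j m := lz_eq_tinf_of_occursAt T hT S j m hSlen hj
    by_cases hjeq : j = lzP fs k
    · refine ⟨k, hk, 0, by omega, ?_⟩
      rw [hS, hSj, hjeq]
      apply lz_tinf_mod
      have e : lzP fs k + T.length * m - 0 = lzP fs k + T.length * m := by omega
      rw [e, Nat.add_mul_mod_self_left]
    · by_cases hcross : lzP fs (k + 1) < j + m
      · have hk1z : k + 1 < fs.length := by
          by_contra hc
          have : k + 1 = fs.length := by omega
          rw [this] at hcross
          omega
        refine ⟨k + 1, hk1z, lzP fs (k + 1) - j, by omega, ?_⟩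
        rw [hS, hSj]
        apply lz_tinf_mod
        have e : lzP fs (k + 1) + T.length * m - (lzP fs (k + 1) - j) =
            j + T.length * m := by omega
        rw [e, Nat.add_mul_mod_self_left]
      · exfalso
        have hj_gt : lzP fs k < j := lt_of_le_of_ne hk1 (Ne.symm hjeq)
        have hF : LZ77Factor T (lzP fs k) (fs.get ⟨k, hk⟩) := h.2 k hk
        have hsucc := lzP_succ fs k hk
        rcases hF.2.2 with ⟨a, ha, _⟩ | ⟨⟨q, hq, hqocc⟩, _⟩
        · have hF1 : (fs.get ⟨k, hk⟩).length = 1 := by rw [ha]; rfl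
          omega
        · obtain ⟨hFb, hFelem⟩ := (lz_occursAt_iff T (fs.get ⟨k, hk⟩) (lzP fs k)).mp hF.2.1
          obtain ⟨hqb, hqelem⟩ := (lz_occursAt_iff T (fs.get ⟨k, hk⟩) q).mp hqocc
          have htm : (j - lzP fs k) + m ≤ (fs.get ⟨k, hk⟩).length := by omega
          apply hmin (q + (j - lzP fs k)) (by omega)
          rw [lz_occursAt_iff]
          refine ⟨by omega, fun d hd => ?_⟩
          have hd' : d < m := by omega
          obtain ⟨hjb', hjelem⟩ := (lz_occursAt_iff T S j).mp hj
          have e1 : S[d] = T[j + d]'(by omega) := hjelem d hd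
          have e2 : (fs.get ⟨k, hk⟩)[(j - lzP fs k) + d]'(by omega) =
              T[lzP fs k + ((j - lzP fs k) + d)]'(by omega) :=
            hFelem ((j - lzP fs k) + d) (by omega)
          have e3 : (fs.get ⟨k, hk⟩)[(j - lzP fs k) + d]'(by omega) =
              T[q + ((j - lzP fs k) + d)]'(by omega) :=
            hqelem ((j - lzP fs k) + d) (by omega)
          have e4 : T[j + d]'(by omega) = T[lzP fs k + ((j - lzP fs k) + d)]'(by omega) := by
            congr 1; omega
          have e5 : T[q + ((j - lzP fs k) + d)]'(by omega) =
              T[q + (j - lzP fs k) + d]'(by omega) := by congr 1; omega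
          exact e1.trans (e4.trans (e2.symm.trans (e3.trans e5)))
  · -- wrap: uses sentinel
    have hlastP := lz_lastP T hT hsent fs h
    refine ⟨fs.length - 1, by omega, T.length - 1 - i % T.length, by omega, ?_⟩
    rw [hS]
    apply lz_tinf_mod
    have e : lzP fs (fs.length - 1) + T.length * m - (T.length - 1 - i % T.length) =
        i % T.length + T.length * m := by omega
    rw [e, Nat.add_mul_mod_self_left, Nat.mod_mod_of_dvd _ dvd_rfl]

end LZ

theorem stmt6 {α : Type*} [DecidableEq α] (T : List α) (hT : T ≠ [])
    (hsent : T.count (T.getLast hT) = 1)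
    (fs : List (List α)) (h : IsLZ77 T fs) (m : ℕ) (hm : 1 ≤ m) :
    {S : List α | ∃ i : ℕ, S = TinfTake T hT i m}.ncard ≤ m * fs.length := by
  classical
  set f : Fin fs.length × Fin m → List α :=
    fun kd => TinfTake T hT (lzP fs kd.1 + T.length * m - kd.2) m with hf
  have hsub : {S : List α | ∃ i : ℕ, S = TinfTake T hT i m} ⊆ f '' Set.univ := by
    rintro S ⟨i, rfl⟩
    obtain ⟨k, hk, d, hd, he⟩ := lz_main T hT hsent fs h m hm i
    exact ⟨(⟨k, hk⟩, ⟨d, hd⟩), Set.mem_univ _, he.symm⟩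
  calc {S : List α | ∃ i : ℕ, S = TinfTake T hT i m}.ncard
      ≤ (f '' Set.univ).ncard := Set.ncard_le_ncard hsub (Set.finite_univ.image f)
    _ ≤ (Set.univ : Set (Fin fs.length × Fin m)).ncard := Set.ncard_image_le Set.finite_univ
    _ = m * fs.length := by
        rw [Set.ncard_univ, Nat.card_eq_fintype_card]
        simp [mul_comm]
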